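/- Let D be a nonempty set, (μ_k)_{k≥1} a sequence in D, and (H_k)_{k≥1}, (E_k)_{k≥1} sequences of functions D → ℝ satisfying, for all k ≥ 1: (a) 0 ≤ E_k(μ) ≤ H_k(μ) for all μ ∈ D; (b) H_{k+1}(μ) ≤ H_k(μ) for all μ ∈ D; (c) H_k(μ_i) = 0 for all 1 ≤ i ≤ k; (d) H_k(ν) ≤ H_k(μ_{k+1}) for all ν ∈ D. If μ_j = μ_{j+ℓ} for some indices j ≥ 1 and ℓ ≥ 1, then for every integer m ≥ ℓ − 1 and every μ ∈ D one has H_{j+m}(μ) = 0 and E_{j+m}(μ) = 0. -/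
import Mathlib


/-- Theorem 4.1 of the paper (abstract form): if the surrogate errors `H_k` dominate the actual
errors `E_k ≥ 0`, decrease monotonically in `k`, vanish at the previously sampled points, and are
maximized at the next sample point, then stagnation of the sample sequence (`μ_j = μ_{j+ℓ}`)
forces `H_{j+m} ≡ 0` and `E_{j+m} ≡ 0` for all `m ≥ ℓ − 1`. -/
theorem surrogate_error_zero_of_stagnation
    (D : Type*) [Nonempty D] (μ : ℕ → D) (H E : ℕ → D → ℝ)
    (ha : ∀ k, 1 ≤ k → ∀ x : D, 0 ≤ E k x ∧ E k x ≤ H k x)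
    (hb : ∀ k, 1 ≤ k → ∀ x : D, H (k + 1) x ≤ H k x)
    (hc : ∀ k, 1 ≤ k → ∀ i, 1 ≤ i → i ≤ k → H k (μ i) = 0)
    (hd : ∀ k, 1 ≤ k → ∀ x : D, H k x ≤ H k (μ (k + 1)))
    (j ℓ : ℕ) (hj : 1 ≤ j) (hℓ : 1 ≤ ℓ) (heq : μ j = μ (j + ℓ)) :
    ∀ m, ℓ - 1 ≤ m → ∀ x : D, H (j + m) x = 0 ∧ E (j + m) x = 0 := by
  -- let k0 = j + (ℓ - 1); note k0 + 1 = j + ℓ and 1 ≤ k0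
  set k0 := j + (ℓ - 1) with hk0
  have hk01 : 1 ≤ k0 := le_trans hj (Nat.le_add_right _ _)
  have hk0succ : k0 + 1 = j + ℓ := by omega
  have hHnonneg : ∀ k, 1 ≤ k → ∀ x : D, 0 ≤ H k x := fun k hk x =>
    le_trans (ha k hk x).1 (ha k hk x).2
  -- H k0 vanishes everywhere
  have hk0zero : ∀ x : D, H k0 x = 0 := by
    have hμ : H k0 (μ (k0 + 1)) = 0 := by
      rw [hk0succ, ← heq]
      exact hc k0 hk01 j hj (by omega)
    intro x
    exact le_antisymm ((hd k0 hk01 x).trans hμ.le) (hHnonneg k0 hk01 x)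
  -- H (k0 + n) vanishes everywhere, by induction
  have hzero : ∀ n, ∀ x : D, H (k0 + n) x = 0 := by
    intro n
    induction n with
    | zero => exact hk0zero
    | succ n ih =>
      intro x
      refine le_antisymm ?_ (hHnonneg _ (by omega) x)
      calc H (k0 + (n + 1)) x = H ((k0 + n) + 1) x := by ring_nf
        _ ≤ H (k0 + n) x := hb (k0 + n) (by omega) x
        _ = 0 := ih x
  intro m hm x
  have hHm : H (j + m) x = 0 := by
    have : j + m = k0 + (m - (ℓ - 1)) := by omega
    rw [this]; exact hzero _ x
  refine ⟨hHm, le_antisymm ?_ (ha (j + m) (by omega) x).1⟩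
  exact (ha (j + m) (by omega) x).2.trans hHm.le
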